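/- For all integers a, b ≥ 2 with a + b > 8, we have p(a) * p(b) ≥ p(a + b). -/

import Mathlib

/-- `p n` is the number of partitions of `n`. -/
def p (n : ℕ) : ℕ := Fintype.card (Nat.Partition n)

namespace BO

open Multiset

/-- Partitions of `n` all of whose parts are `≥ K`. -/
def QP (K n : ℕ) := {c : Nat.Partition n // ∀ x ∈ c.parts, K ≤ x}

instance (K n : ℕ) : DecidablePred (fun c : Nat.Partition n => ∀ x ∈ c.parts, K ≤ x) :=
  fun c => Multiset.decidableDforallMultiset

instance (K n : ℕ) : Fintype (QP K n) := Subtype.fintype _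

/-- number of partitions of `n` with all parts `≥ K`. -/
def q (K n : ℕ) : ℕ := Fintype.card (QP K n)

/-- minimum element of a multiset of naturals -/
noncomputable def minP (s : Multiset ℕ) : ℕ := sInf {x | x ∈ s}

lemma minP_mem {s : Multiset ℕ} (h : s ≠ 0) : minP s ∈ s := by
  have : {x | x ∈ s}.Nonempty := by
    obtain ⟨x, hx⟩ := Multiset.exists_mem_of_ne_zero h
    exact ⟨x, hx⟩
  exact Nat.sInf_mem this

lemma minP_le {s : Multiset ℕ} {x : ℕ} (h : x ∈ s) : minP s ≤ x := Nat.sInf_le h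

/-- maximum element of a multiset of naturals -/
noncomputable def maxP (s : Multiset ℕ) : ℕ := sSup {x | x ∈ s}

lemma bddP (s : Multiset ℕ) : BddAbove {x | x ∈ s} :=
  ⟨s.sum, fun x hx => Multiset.le_sum_of_mem hx⟩

lemma maxP_mem {s : Multiset ℕ} (h : s ≠ 0) : maxP s ∈ s := by
  have hne : {x | x ∈ s}.Nonempty := by
    obtain ⟨x, hx⟩ := Multiset.exists_mem_of_ne_zero h
    exact ⟨x, hx⟩
  exact Nat.sSup_mem hne (bddP s)

lemma le_maxP {s : Multiset ℕ} {x : ℕ} (h : x ∈ s) : x ≤ maxP s :=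
  le_csSup (bddP s) h

lemma p_eq_q1 (n : ℕ) : p n = q 1 n := by
  refine Fintype.card_congr ⟨fun c => ⟨c, fun x hx => c.parts_pos hx⟩, fun c => c.1,
    fun c => rfl, fun c => rfl⟩

/-- the basic identity: partitions with parts ≥ K of n+K either contain a part K
(remove it) or have all parts ≥ K+1. -/
lemma ID (K n : ℕ) (hK : 1 ≤ K) : q K (n + K) = q K n + q (K + 1) (n + K) := by
  classical
  rw [q, q, q, ← Fintype.card_sum]
  refine Fintype.card_congr (Equiv.symm ?_)
  refine
    { toFun := fun c => ?_
      invFun := fun c => ?_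
      left_inv := ?_
      right_inv := ?_ }
  · rcases c with c | c
    · refine ⟨⟨K ::ₘ c.1.parts, fun {x} hx => ?_, by simp [c.1.parts_sum, Nat.add_comm]⟩,
        fun x hx => ?_⟩
      · rcases Multiset.mem_cons.1 hx with h | h
        · omega
        · exact c.1.parts_pos h
      · rcases Multiset.mem_cons.1 hx with h | h
        · omega
        · exact c.2 x h
    · exact ⟨c.1, fun x hx => le_trans (by omega) (c.2 x hx)⟩
  · by_cases h : K ∈ c.1.parts
    · refine Sum.inl ⟨⟨c.1.parts.erase K, fun {x} hx => c.1.parts_pos (Multiset.mem_of_mem_erase hx), ?_⟩,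
        fun x hx => c.2 x (Multiset.mem_of_mem_erase hx)⟩
      have := c.1.parts_sum
      have hsum : c.1.parts.sum = K + (c.1.parts.erase K).sum := by
        conv_lhs => rw [← Multiset.cons_erase h]
        simp
      omega
    · refine Sum.inr ⟨c.1, fun x hx => ?_⟩
      rcases Nat.lt_or_ge K x with h' | h'
      · omega
      · have := c.2 x hx
        have : x = K := le_antisymm h' this
        exact absurd (this ▸ hx) h
  · rintro (c | c)
    · have hmem : K ∈ K ::ₘ c.1.parts := Multiset.mem_cons_self _ _
      simp only [hmem, dif_pos]
      congr 1
      refine Subtype.ext (Nat.Partition.ext ?_)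
      simp [Multiset.erase_cons_head]
    · have hnmem : K ∉ c.1.parts := fun h => by have := c.2 K h; omega
      simp only [hnmem, dif_neg, not_false_iff]
      exact congrArg Sum.inr (Subtype.ext rfl)
  · intro c
    by_cases h : K ∈ c.1.parts
    · simp only [h, dif_pos]
      refine Subtype.ext (Nat.Partition.ext ?_)
      simp [Multiset.cons_erase h]
    · simp only [h, dif_neg, not_false_iff]
      exact Subtype.ext rfl

/-- inclusion : stronger bound fewer partitions -/
lemma q_mono_K (K n : ℕ) : q (K + 1) n ≤ q K n := by
  refine Fintype.card_le_of_injective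
    (fun c => ⟨c.1, fun x hx => le_trans (by omega) (c.2 x hx)⟩) ?_
  intro c d h
  apply Subtype.ext
  injection h

lemma q_le_q_one (K n : ℕ) (hK : 1 ≤ K) : q K n ≤ q 1 n := by
  induction K with
  | zero => omega
  | succ K ih =>
    rcases Nat.eq_or_lt_of_le hK with h | h
    · simp [← h]
    · exact le_trans (q_mono_K K n) (ih (by omega))

lemma q_le_p (K n : ℕ) : q K n ≤ p n := by
  rcases Nat.eq_zero_or_pos K with h | h
  · subst h
    rw [p_eq_q1]
    refine Fintype.card_le_of_injective (fun c => ⟨c.1, fun x hx => c.1.parts_pos hx⟩) ?_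
    intro c d h
    apply Subtype.ext
    injection h
  · rw [p_eq_q1]; exact q_le_q_one K n h

lemma q_zero (K : ℕ) : q K 0 = 1 := by
  rw [q]
  rw [Fintype.card_eq_one_iff]
  refine ⟨⟨⟨0, fun {i} hi => absurd hi (by simp), by simp⟩, fun x hx => absurd hx (by simp)⟩, ?_⟩
  rintro ⟨⟨parts, hpos, hsum⟩, hb⟩
  have : parts = 0 := by
    by_contra h
    obtain ⟨x, hx⟩ := Multiset.exists_mem_of_ne_zero h
    have h1 := hpos hx
    have h2 := Multiset.le_sum_of_mem hx
    omega
  subst this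
  rfl

lemma q_small (K n : ℕ) (h1 : 1 ≤ n) (h2 : n < K) : q K n = 0 := by
  rw [q, Fintype.card_eq_zero_iff]
  refine ⟨fun c => ?_⟩
  have hne : c.1.parts ≠ 0 := by
    intro h
    have := c.1.parts_sum
    rw [h] at this
    simp at this
    omega
  obtain ⟨x, hx⟩ := Multiset.exists_mem_of_ne_zero hne
  have h3 := c.2 x hx
  have h4 := Multiset.le_sum_of_mem hx
  rw [c.1.parts_sum] at h4
  omega

/-- reduce the minimum by one : `q (K+1) (n+1) ≤ q K n`, by recursion. -/
lemma q_redmin : ∀ K n : ℕ, 1 ≤ K → q (K + 1) (n + 1) ≤ q K n := by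
  have main : ∀ d K n : ℕ, n - K ≤ d → 1 ≤ K → q (K + 1) (n + 1) ≤ q K n := by
    intro d
    induction d with
    | zero =>
      intro K n hd hK
      have hn : n ≤ K := by omega
      rcases Nat.lt_or_ge n K with h | h
      · rw [q_small (K + 1) (n + 1) (by omega) (by omega)]
        omega
      · -- n = K
        have hnK : n = K := by omega
        subst hnK
        have e1 : q (n + 1) (n + 1) = q (n + 1) 0 + q (n + 2) (n + 1) := by
          have := ID (n + 1) 0 (by omega)
          simpa using this
        have e2 : q n n = q n 0 + q (n + 1) n := by
          have := ID n 0 (by omega)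
          simpa using this
        rw [e1, e2, q_zero, q_zero, q_small (n + 2) (n + 1) (by omega) (by omega),
          q_small (n + 1) n (by omega) (by omega)]
    | succ d ih =>
      intro K n hd hK
      rcases Nat.lt_or_ge n K with h | h
      · rw [q_small (K + 1) (n + 1) (by omega) (by omega)]
        omega
      · -- n ≥ K
        have e1 : q (K + 1) (n + 1) = q (K + 1) (n - K) + q (K + 2) (n + 1) := by
          have := ID (K + 1) (n - K) (by omega)
          rw [show n - K + (K + 1) = n + 1 by omega] at this
          exact this
        have e2 : q K n = q K (n - K) + q (K + 1) n := by
          have := ID K (n - K) (by omega)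
          rw [show n - K + K = n by omega] at this
          exact this
        rw [e1, e2]
        have t1 : q (K + 1) (n - K) ≤ q K (n - K) := q_mono_K _ _
        have t2 : q (K + 2) (n + 1) ≤ q (K + 1) n := by
          rcases Nat.eq_zero_or_pos n with h0 | h0
          · omega
          · have := ih (K + 1) n (by omega) (by omega)
            exact this
        omega
  intro K n hK
  exact main (n - K) K n le_rfl hK

/-- the "SUB" chain: `q K (c + b) ≤ p b` when `c < K`. -/
lemma q_sub (K c b : ℕ) (h : c < K) : q K (c + b) ≤ p b := by
  induction c generalizing K with
  | zero => simpa using q_le_p K b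
  | succ c ih =>
    have h1 : q K (c + b + 1) ≤ q (K - 1) (c + b) := by
      have := q_redmin (K - 1) (c + b) (by omega)
      rw [show K - 1 + 1 = K by omega] at this
      exact this
    have h2 : q (K - 1) (c + b) ≤ p b := ih (K - 1) (by omega)
    calc q K (c + 1 + b) = q K (c + b + 1) := by ring_nf
    _ ≤ q (K - 1) (c + b) := h1
    _ ≤ p b := h2

lemma qID' (K n : ℕ) (hK : 1 ≤ K) (h : K ≤ n) : q K n = q K (n - K) + q (K + 1) n := by
  have := ID K (n - K) hK
  rw [show n - K + K = n by omega] at this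
  exact this

lemma q_window : ∀ K n : ℕ, 1 ≤ K → K ≤ n → n < 2 * K → q K n = 1 := by
  have main : ∀ d K n : ℕ, n - K ≤ d → 1 ≤ K → K ≤ n → n < 2 * K → q K n = 1 := by
    intro d
    induction d with
    | zero =>
      intro K n hd hK h1 h2
      rw [qID' K n hK h1, show n - K = 0 by omega, q_zero, q_small (K + 1) n (by omega) (by omega)]
    | succ d ih =>
      intro K n hd hK h1 h2
      rcases Nat.eq_or_lt_of_le h1 with h | h
      · rw [qID' K n hK h1, show n - K = 0 by omega, q_zero, q_small (K + 1) n (by omega) (by omega)]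
      · rw [qID' K n hK h1, q_small K (n - K) (by omega) (by omega),
          ih (K + 1) n (by omega) (by omega) (by omega) (by omega)]
  intro K n
  exact main (n - K) K n le_rfl

lemma v2_2 : q 2 2 = 1 := by
  rw [qID' 2 2 (by norm_num) (by norm_num)]
  norm_num [q_zero 2, q_small 3 2 (by norm_num) (by norm_num)]
lemma v2_3 : q 2 3 = 1 := by
  rw [qID' 2 3 (by norm_num) (by norm_num)]
  norm_num [q_small 2 1 (by norm_num) (by norm_num), q_window 3 3 (by norm_num) (by norm_num) (by norm_num)]
lemma v3_6 : q 3 6 = 2 := by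
  rw [qID' 3 6 (by norm_num) (by norm_num)]
  norm_num [q_window 3 3 (by norm_num) (by norm_num) (by norm_num), q_window 4 6 (by norm_num) (by norm_num) (by norm_num)]
lemma v3_7 : q 3 7 = 2 := by
  rw [qID' 3 7 (by norm_num) (by norm_num)]
  norm_num [q_window 3 4 (by norm_num) (by norm_num) (by norm_num), q_window 4 7 (by norm_num) (by norm_num) (by norm_num)]
lemma v4_8 : q 4 8 = 2 := by
  rw [qID' 4 8 (by norm_num) (by norm_num)]
  norm_num [q_window 4 4 (by norm_num) (by norm_num) (by norm_num), q_window 5 8 (by norm_num) (by norm_num) (by norm_num)]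
lemma v3_8 : q 3 8 = 3 := by
  rw [qID' 3 8 (by norm_num) (by norm_num)]
  norm_num [q_window 3 5 (by norm_num) (by norm_num) (by norm_num), v4_8]
lemma v4_9 : q 4 9 = 2 := by
  rw [qID' 4 9 (by norm_num) (by norm_num)]
  norm_num [q_window 4 5 (by norm_num) (by norm_num) (by norm_num), q_window 5 9 (by norm_num) (by norm_num) (by norm_num)]
lemma v3_9 : q 3 9 = 4 := by
  rw [qID' 3 9 (by norm_num) (by norm_num)]
  norm_num [v3_6, v4_9]
lemma v5_10 : q 5 10 = 2 := by
  rw [qID' 5 10 (by norm_num) (by norm_num)]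
  norm_num [q_window 5 5 (by norm_num) (by norm_num) (by norm_num), q_window 6 10 (by norm_num) (by norm_num) (by norm_num)]
lemma v4_10 : q 4 10 = 3 := by
  rw [qID' 4 10 (by norm_num) (by norm_num)]
  norm_num [q_window 4 6 (by norm_num) (by norm_num) (by norm_num), v5_10]
lemma v3_10 : q 3 10 = 5 := by
  rw [qID' 3 10 (by norm_num) (by norm_num)]
  norm_num [v3_7, v4_10]
lemma v2_4 : q 2 4 = 2 := by
  rw [qID' 2 4 (by norm_num) (by norm_num)]
  norm_num [v2_2, q_window 3 4 (by norm_num) (by norm_num) (by norm_num)]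
lemma v2_5 : q 2 5 = 2 := by
  rw [qID' 2 5 (by norm_num) (by norm_num)]
  norm_num [v2_3, q_window 3 5 (by norm_num) (by norm_num) (by norm_num)]
lemma v2_6 : q 2 6 = 4 := by
  rw [qID' 2 6 (by norm_num) (by norm_num)]
  norm_num [v2_4, v3_6]
lemma v2_7 : q 2 7 = 4 := by
  rw [qID' 2 7 (by norm_num) (by norm_num)]
  norm_num [v2_5, v3_7]
lemma v2_8 : q 2 8 = 7 := by
  rw [qID' 2 8 (by norm_num) (by norm_num)]
  norm_num [v2_6, v3_8]
lemma v2_9 : q 2 9 = 8 := by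
  rw [qID' 2 9 (by norm_num) (by norm_num)]
  norm_num [v2_7, v3_9]
lemma v2_10 : q 2 10 = 12 := by
  rw [qID' 2 10 (by norm_num) (by norm_num)]
  norm_num [v2_8, v3_10]
lemma pv1 : p 1 = 1 := by
  rw [p_eq_q1, qID' 1 1 (by norm_num) (by norm_num)]
  norm_num [q_zero 1, q_small 2 1 (by norm_num) (by norm_num)]
lemma pv2 : p 2 = 2 := by
  rw [p_eq_q1, qID' 1 2 (by norm_num) (by norm_num)]
  norm_num [← p_eq_q1 1, pv1, v2_2]
lemma pv3 : p 3 = 3 := by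
  rw [p_eq_q1, qID' 1 3 (by norm_num) (by norm_num)]
  norm_num [← p_eq_q1 2, pv2, v2_3]
lemma pv4 : p 4 = 5 := by
  rw [p_eq_q1, qID' 1 4 (by norm_num) (by norm_num)]
  norm_num [← p_eq_q1 3, pv3, v2_4]
lemma pv5 : p 5 = 7 := by
  rw [p_eq_q1, qID' 1 5 (by norm_num) (by norm_num)]
  norm_num [← p_eq_q1 4, pv4, v2_5]
lemma pv6 : p 6 = 11 := by
  rw [p_eq_q1, qID' 1 6 (by norm_num) (by norm_num)]
  norm_num [← p_eq_q1 5, pv5, v2_6]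
lemma pv7 : p 7 = 15 := by
  rw [p_eq_q1, qID' 1 7 (by norm_num) (by norm_num)]
  norm_num [← p_eq_q1 6, pv6, v2_7]
lemma pv8 : p 8 = 22 := by
  rw [p_eq_q1, qID' 1 8 (by norm_num) (by norm_num)]
  norm_num [← p_eq_q1 7, pv7, v2_8]
lemma pv9 : p 9 = 30 := by
  rw [p_eq_q1, qID' 1 9 (by norm_num) (by norm_num)]
  norm_num [← p_eq_q1 8, pv8, v2_9]
lemma pv10 : p 10 = 42 := by
  rw [p_eq_q1, qID' 1 10 (by norm_num) (by norm_num)]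
  norm_num [← p_eq_q1 9, pv9, v2_10]

lemma sum_erase' {s : Multiset ℕ} {x : ℕ} (h : x ∈ s) : s.sum = x + (s.erase x).sum := by
  conv_lhs => rw [← Multiset.cons_erase h]
  simp

lemma parts_ne {n : ℕ} (c : Nat.Partition n) (h : 1 ≤ n) : c.parts ≠ 0 := by
  intro h0
  have := c.parts_sum
  rw [h0] at this
  simp at this
  omega

lemma count_one_eq_zero {s : Multiset ℕ} (h : ∀ x ∈ s, 2 ≤ x) : s.count 1 = 0 := by
  rw [Multiset.count_eq_zero]
  intro h1
  have := h 1 h1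
  omega

lemma filter_two_le_eq_self {s : Multiset ℕ} (h : ∀ x ∈ s, 2 ≤ x) :
    s.filter (fun x => 2 ≤ x) = s :=
  Multiset.filter_eq_self.2 h

lemma filter_two_le_replicate (k : ℕ) :
    (Multiset.replicate k 1).filter (fun x => 2 ≤ x) = 0 := by
  rw [Multiset.filter_eq_nil]
  intro a ha
  rw [Multiset.eq_of_mem_replicate ha]
  omega

lemma count_one_replicate (k : ℕ) : (Multiset.replicate k 1).count 1 = k := by
  simp [Multiset.count_replicate]

/-- the decomposition of a partition of `b` into ones and big parts. -/
lemma ones_decomp {b : ℕ} (ν : Nat.Partition b) :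
    ν.parts.count 1 + (ν.parts.filter (fun x => 2 ≤ x)).sum = b ∧
      ν.parts = Multiset.replicate (ν.parts.count 1) 1 + ν.parts.filter (fun x => 2 ≤ x) := by
  have hsplit : ν.parts = ν.parts.filter (fun x => 2 ≤ x) + ν.parts.filter (fun x => ¬ 2 ≤ x) :=
    (Multiset.filter_add_not _ _).symm
  have hones : ν.parts.filter (fun x => ¬ 2 ≤ x) = Multiset.replicate (ν.parts.count 1) 1 := by
    have h1 : ν.parts.filter (fun x => ¬ 2 ≤ x) = ν.parts.filter (fun x => x = 1) := by
      apply Multiset.filter_congr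
      intro x hx
      have := ν.parts_pos hx
      constructor
      · intro h; omega
      · intro h; omega
    rw [h1]
    have := Multiset.filter_eq ν.parts 1
    rw [← this]
    apply Multiset.filter_congr
    intro x _
    exact ⟨fun h => h.symm ▸ rfl, fun h => by simpa using h.symm⟩
  constructor
  · have := ν.parts_sum
    conv_lhs at this => rw [hsplit]
    rw [Multiset.sum_add, hones] at this
    simp only [Multiset.sum_replicate, smul_eq_mul, mul_one] at this
    omega
  · conv_lhs => rw [hsplit]
    rw [hones, add_comm]

section Amap

variable (b : ℕ)

/-- The injection for lemma (A). -/
noncomputable def fA (hb : 6 ≤ b) : QP 2 (b + 1) ⊕ QP 2 (b + 2) → Nat.Partition b := fun z =>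
  match z with
  | Sum.inl c =>
      let s := minP c.1.parts
      have hs : s ∈ c.1.parts := minP_mem (parts_ne c.1 (by omega))
      have hs2 : 2 ≤ s := c.2 s hs
      ⟨c.1.parts.erase s + Multiset.replicate (s - 1) 1,
        fun {x} hx => by
          rcases Multiset.mem_add.1 hx with h | h
          · exact c.1.parts_pos (Multiset.mem_of_mem_erase h)
          · rw [Multiset.eq_of_mem_replicate h]; omega,
        by
          rw [Multiset.sum_add, Multiset.sum_replicate, smul_eq_mul, mul_one]
          have := sum_erase' hs
          rw [c.1.parts_sum] at this
          omega⟩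
  | Sum.inr c =>
      if h2 : (2 : ℕ) ∈ c.1.parts then
        ⟨c.1.parts.erase 2,
          fun {x} hx => c.1.parts_pos (Multiset.mem_of_mem_erase hx),
          by
            have := sum_erase' h2
            rw [c.1.parts_sum] at this
            omega⟩
      else if hcard : Multiset.card c.1.parts = 1 then
        ⟨2 ::ₘ 2 ::ₘ Multiset.replicate (b - 4) 1,
          fun {x} hx => by
            rcases Multiset.mem_cons.1 hx with h | h
            · omega
            rcases Multiset.mem_cons.1 h with h | h
            · omega
            · rw [Multiset.eq_of_mem_replicate h]; omega,
          by
            rw [Multiset.sum_cons, Multiset.sum_cons, Multiset.sum_replicate, smul_eq_mul, mul_one]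
            omega⟩
      else
        let s := minP c.1.parts
        have hs : s ∈ c.1.parts := minP_mem (parts_ne c.1 (by omega))
        have hs3 : 3 ≤ s := by
          have h2' := c.2 s hs
          rcases Nat.eq_or_lt_of_le h2' with h | h
          · rw [← h] at hs
            exact absurd hs h2
          · omega
        have hne2 : c.1.parts.erase s ≠ 0 := by
          intro h0
          apply hcard
          have := Multiset.cons_erase hs
          rw [h0] at this
          rw [← this]
          rfl
        let t := minP (c.1.parts.erase s)
        have ht : t ∈ c.1.parts.erase s := minP_mem hne2
        have ht3 : 3 ≤ t := by
          have htp := Multiset.mem_of_mem_erase ht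
          have := c.2 t htp
          rcases Nat.eq_or_lt_of_le this with h | h
          · rw [← h] at htp
            exact absurd htp h2
          · omega
        ⟨(s - 1) ::ₘ ((c.1.parts.erase s).erase t) + Multiset.replicate (t - 1) 1,
          fun {x} hx => by
            rcases Multiset.mem_add.1 hx with h | h
            · rcases Multiset.mem_cons.1 h with h | h
              · omega
              · exact c.1.parts_pos (Multiset.mem_of_mem_erase (Multiset.mem_of_mem_erase h))
            · rw [Multiset.eq_of_mem_replicate h]; omega,
          by
            rw [Multiset.sum_add, Multiset.sum_cons, Multiset.sum_replicate, smul_eq_mul, mul_one]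
            have e1 := sum_erase' hs
            rw [c.1.parts_sum] at e1
            have e2 := sum_erase' ht
            omega⟩

/-- left inverse of fA -/
noncomputable def gA (hb : 6 ≤ b) : Nat.Partition b → QP 2 (b + 1) ⊕ QP 2 (b + 2) := fun ν =>
  if hm : ν.parts.count 1 = 0 then
    Sum.inr ⟨⟨2 ::ₘ ν.parts.filter (fun x => 2 ≤ x), fun {x} hx => by
      rcases Multiset.mem_cons.1 hx with h | h
      · omega
      · have := (Multiset.mem_filter.1 h).2; omega,
      by
        have hmsum := (ones_decomp ν).1
        rw [Multiset.sum_cons]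
        omega⟩,
      fun x hx => by
        rcases Multiset.mem_cons.1 hx with h | h
        · omega
        · exact (Multiset.mem_filter.1 h).2⟩
  else if hsp : ν.parts.count 1 = b - 4 ∧ ν.parts.filter (fun x => 2 ≤ x) = {2, 2} then
    Sum.inr ⟨⟨{b + 2}, fun {x} hx => by
        rw [Multiset.mem_singleton.1 hx]; omega,
      by simp⟩,
      fun x hx => by rw [Multiset.mem_singleton.1 hx]; omega⟩
  else if hmin : ∀ x ∈ ν.parts.filter (fun x => 2 ≤ x), ν.parts.count 1 + 1 ≤ x then
    Sum.inl ⟨⟨(ν.parts.count 1 + 1) ::ₘ ν.parts.filter (fun x => 2 ≤ x), fun {x} hx => by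
      rcases Multiset.mem_cons.1 hx with h | h
      · omega
      · have := (Multiset.mem_filter.1 h).2; omega,
      by
        have hmsum := (ones_decomp ν).1
        rw [Multiset.sum_cons]
        omega⟩,
      fun x hx => by
        rcases Multiset.mem_cons.1 hx with h | h
        · omega
        · have := (Multiset.mem_filter.1 h).2; omega⟩
  else
    Sum.inr ⟨⟨(minP (ν.parts.filter (fun x => 2 ≤ x)) + 1) ::ₘ (ν.parts.count 1 + 1) ::ₘ
        (ν.parts.filter (fun x => 2 ≤ x)).erase (minP (ν.parts.filter (fun x => 2 ≤ x))),
      fun {x} hx => by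
        rcases Multiset.mem_cons.1 hx with h | h
        · omega
        rcases Multiset.mem_cons.1 h with h | h
        · omega
        · have := (Multiset.mem_filter.1 (Multiset.mem_of_mem_erase h)).2; omega,
      by
        have hmsum := (ones_decomp ν).1
        have hRne : ν.parts.filter (fun x => 2 ≤ x) ≠ 0 := by
          intro h0
          apply hmin
          rw [h0]
          intro x hx
          exact absurd hx (Multiset.notMem_zero x)
        have hmem := minP_mem hRne
        have := sum_erase' hmem
        rw [Multiset.sum_cons, Multiset.sum_cons]
        omega⟩,
      fun x hx => by
        have hRne : ν.parts.filter (fun x => 2 ≤ x) ≠ 0 := by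
          intro h0
          apply hmin
          rw [h0]
          intro x hx
          exact absurd hx (Multiset.notMem_zero x)
        have hmem := minP_mem hRne
        rcases Multiset.mem_cons.1 hx with h | h
        · have := (Multiset.mem_filter.1 hmem).2; omega
        rcases Multiset.mem_cons.1 h with h | h
        · omega
        · exact (Multiset.mem_filter.1 (Multiset.mem_of_mem_erase h)).2⟩

lemma count_one_mix {X : Multiset ℕ} (h : ∀ x ∈ X, 2 ≤ x) (k : ℕ) :
    (X + Multiset.replicate k 1).count 1 = k := by
  rw [Multiset.count_add, count_one_eq_zero h, count_one_replicate, zero_add]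

lemma filter_mix {X : Multiset ℕ} (h : ∀ x ∈ X, 2 ≤ x) (k : ℕ) :
    (X + Multiset.replicate k 1).filter (fun x => 2 ≤ x) = X := by
  rw [Multiset.filter_add, filter_two_le_eq_self h, filter_two_le_replicate, add_zero]

lemma gA_inl (hb : 6 ≤ b) (ν : Nat.Partition b) (d : QP 2 (b + 1))
    (h1 : ν.parts.count 1 ≠ 0)
    (h2 : ¬(ν.parts.count 1 = b - 4 ∧ ν.parts.filter (fun x => 2 ≤ x) = {2, 2}))
    (h3 : ∀ x ∈ ν.parts.filter (fun x => 2 ≤ x), ν.parts.count 1 + 1 ≤ x)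
    (hd : d.1.parts = (ν.parts.count 1 + 1) ::ₘ ν.parts.filter (fun x => 2 ≤ x)) :
    gA b hb ν = Sum.inl d := by
  unfold gA
  rw [dif_neg h1, dif_neg h2, dif_pos h3]
  exact congrArg _ (Subtype.ext (Nat.Partition.ext hd.symm))

lemma gA_inr1 (hb : 6 ≤ b) (ν : Nat.Partition b) (d : QP 2 (b + 2))
    (h1 : ν.parts.count 1 = 0)
    (hd : d.1.parts = 2 ::ₘ ν.parts.filter (fun x => 2 ≤ x)) :
    gA b hb ν = Sum.inr d := by
  unfold gA
  rw [dif_pos h1]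
  exact congrArg _ (Subtype.ext (Nat.Partition.ext hd.symm))

lemma gA_inr2 (hb : 6 ≤ b) (ν : Nat.Partition b) (d : QP 2 (b + 2))
    (h1 : ν.parts.count 1 ≠ 0)
    (h2 : ν.parts.count 1 = b - 4 ∧ ν.parts.filter (fun x => 2 ≤ x) = {2, 2})
    (hd : d.1.parts = {b + 2}) :
    gA b hb ν = Sum.inr d := by
  unfold gA
  rw [dif_neg h1, dif_pos h2]
  exact congrArg _ (Subtype.ext (Nat.Partition.ext hd.symm))

lemma gA_inr3 (hb : 6 ≤ b) (ν : Nat.Partition b) (d : QP 2 (b + 2))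
    (h1 : ν.parts.count 1 ≠ 0)
    (h2 : ¬(ν.parts.count 1 = b - 4 ∧ ν.parts.filter (fun x => 2 ≤ x) = {2, 2}))
    (h3 : ¬ ∀ x ∈ ν.parts.filter (fun x => 2 ≤ x), ν.parts.count 1 + 1 ≤ x)
    (hd : d.1.parts = (minP (ν.parts.filter (fun x => 2 ≤ x)) + 1) ::ₘ (ν.parts.count 1 + 1) ::ₘ
      (ν.parts.filter (fun x => 2 ≤ x)).erase (minP (ν.parts.filter (fun x => 2 ≤ x)))) :
    gA b hb ν = Sum.inr d := by
  unfold gA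
  rw [dif_neg h1, dif_neg h2, dif_neg h3]
  exact congrArg _ (Subtype.ext (Nat.Partition.ext hd.symm))

lemma gfA (hb : 6 ≤ b) : Function.LeftInverse (gA b hb) (fA b hb) := by
  rintro (c | c)
  · -- the Q(b+1) branch
    set P := c.1.parts with hP
    have hne : P ≠ 0 := parts_ne c.1 (by omega)
    set s := minP P with hsdef
    have hs : s ∈ P := minP_mem hne
    have hs2 : 2 ≤ s := c.2 s hs
    have hX : ∀ x ∈ P.erase s, 2 ≤ x := fun x hx => c.2 x (Multiset.mem_of_mem_erase hx)
    have hparts : (fA b hb (Sum.inl c)).parts = P.erase s + Multiset.replicate (s - 1) 1 := rfl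
    have hcount : (fA b hb (Sum.inl c)).parts.count 1 = s - 1 := by
      rw [hparts, count_one_mix hX]
    have hfilter : (fA b hb (Sum.inl c)).parts.filter (fun x => 2 ≤ x) = P.erase s := by
      rw [hparts, filter_mix hX]
    apply gA_inl
    · rw [hcount]; omega
    · rintro ⟨ha, hb2⟩
      rw [hfilter] at hb2
      have h2mem : (2 : ℕ) ∈ P.erase s := by rw [hb2]; simp
      have : s ≤ 2 := minP_le (Multiset.mem_of_mem_erase h2mem)
      rw [hcount] at ha
      omega
    · intro x hx
      rw [hfilter] at hx
      rw [hcount]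
      have := minP_le (Multiset.mem_of_mem_erase hx)
      omega
    · rw [hcount, hfilter, show s - 1 + 1 = s by omega]
      exact (Multiset.cons_erase hs).symm
  · -- the Q(b+2) branch
    set P := c.1.parts with hP
    have hne : P ≠ 0 := parts_ne c.1 (by omega)
    by_cases h2 : (2 : ℕ) ∈ P
    · have hparts : (fA b hb (Sum.inr c)).parts = P.erase 2 := by
        show (if h2 : (2:ℕ) ∈ (c.1).parts then _ else _ : Nat.Partition b).parts = _
        rw [dif_pos h2]
      have hX : ∀ x ∈ P.erase 2, 2 ≤ x := fun x hx => c.2 x (Multiset.mem_of_mem_erase hx)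
      apply gA_inr1
      · rw [hparts]; exact count_one_eq_zero hX
      · rw [hparts, filter_two_le_eq_self hX]
        exact (Multiset.cons_erase h2).symm
    · by_cases hcard : Multiset.card P = 1
      · have hparts : (fA b hb (Sum.inr c)).parts = 2 ::ₘ 2 ::ₘ Multiset.replicate (b - 4) 1 := by
          show (if h2 : (2:ℕ) ∈ (c.1).parts then _ else _ : Nat.Partition b).parts = _
          rw [dif_neg h2, dif_pos hcard]
        have hform : (2 ::ₘ 2 ::ₘ Multiset.replicate (b - 4) 1 : Multiset ℕ)
            = ({2, 2} : Multiset ℕ) + Multiset.replicate (b - 4) 1 := by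
          rfl
        have hX : ∀ x ∈ ({2, 2} : Multiset ℕ), 2 ≤ x := by
          intro x hx
          rcases Multiset.mem_cons.1 hx with h | h
          · omega
          · rw [Multiset.mem_singleton.1 h]
        have hcount : (fA b hb (Sum.inr c)).parts.count 1 = b - 4 := by
          rw [hparts, hform, count_one_mix hX]
        have hfilter : (fA b hb (Sum.inr c)).parts.filter (fun x => 2 ≤ x) = {2, 2} := by
          rw [hparts, hform, filter_mix hX]
        apply gA_inr2
        · rw [hcount]; omega
        · exact ⟨hcount, hfilter⟩
        · obtain ⟨x, hx⟩ := Multiset.card_eq_one.1 hcard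
          have hsum := c.1.parts_sum
          rw [← hP, hx] at hsum ⊢
          simp at hsum
          rw [hsum]
      · -- general branch
        set s := minP P with hsdef
        have hs : s ∈ P := minP_mem hne
        have hs3 : 3 ≤ s := by
          have h2' := c.2 s hs
          rcases Nat.eq_or_lt_of_le h2' with h | h
          · rw [← h] at hs; exact absurd hs h2
          · omega
        have hne2 : P.erase s ≠ 0 := by
          intro h0
          apply hcard
          have hce := Multiset.cons_erase hs
          rw [h0] at hce
          rw [← hce]
          rfl
        set t := minP (P.erase s) with htdef
        have ht : t ∈ P.erase s := minP_mem hne2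
        have htP : t ∈ P := Multiset.mem_of_mem_erase ht
        have ht3 : 3 ≤ t := by
          have := c.2 t htP
          rcases Nat.eq_or_lt_of_le this with h | h
          · rw [← h] at htP; exact absurd htP h2
          · omega
        have hst : s ≤ t := minP_le htP
        have hparts : (fA b hb (Sum.inr c)).parts
            = (s - 1) ::ₘ ((P.erase s).erase t) + Multiset.replicate (t - 1) 1 := by
          show (if h2 : (2:ℕ) ∈ (c.1).parts then _ else _ : Nat.Partition b).parts = _
          rw [dif_neg h2, dif_neg hcard]
        have hrest : ∀ x ∈ (P.erase s).erase t, t ≤ x :=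
          fun x hx => minP_le (Multiset.mem_of_mem_erase hx)
        have hrestP : ∀ x ∈ (P.erase s).erase t, x ∈ P :=
          fun x hx => Multiset.mem_of_mem_erase (Multiset.mem_of_mem_erase hx)
        have hX : ∀ x ∈ (s - 1) ::ₘ ((P.erase s).erase t), 2 ≤ x := by
          intro x hx
          rcases Multiset.mem_cons.1 hx with h | h
          · omega
          · have := hrest x h; omega
        have hcount : (fA b hb (Sum.inr c)).parts.count 1 = t - 1 := by
          rw [hparts, count_one_mix hX]
        have hfilter : (fA b hb (Sum.inr c)).parts.filter (fun x => 2 ≤ x)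
            = (s - 1) ::ₘ ((P.erase s).erase t) := by
          rw [hparts, filter_mix hX]
        have hminX : minP ((s - 1) ::ₘ ((P.erase s).erase t)) = s - 1 := by
          have hm1 : minP ((s - 1) ::ₘ ((P.erase s).erase t)) ≤ s - 1 :=
            minP_le (Multiset.mem_cons_self _ _)
          have hm2 : minP ((s - 1) ::ₘ ((P.erase s).erase t)) ∈
              (s - 1) ::ₘ ((P.erase s).erase t) := minP_mem (by simp)
          rcases Multiset.mem_cons.1 hm2 with h | h
          · exact h
          · have := hrest _ h
            omega
        apply gA_inr3
        · rw [hcount]; omega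
        · rintro ⟨ha, hb2⟩
          rw [hfilter] at hb2
          have hcard2 : Multiset.card ((s - 1) ::ₘ ((P.erase s).erase t)) = 2 := by
            rw [hb2]; rfl
          have hcardrest : Multiset.card ((P.erase s).erase t) = 1 := by
            rw [Multiset.card_cons] at hcard2
            omega
          obtain ⟨y, hy⟩ := Multiset.card_eq_one.1 hcardrest
          have hymem : y ∈ (P.erase s).erase t := by rw [hy]; simp
          have hy2 : y ∈ ((s - 1) ::ₘ ((P.erase s).erase t)) :=
            Multiset.mem_cons_of_mem hymem
          rw [hb2] at hy2
          have hy22 : y = 2 := by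
            rcases Multiset.mem_cons.1 hy2 with h | h
            · exact h
            · exact Multiset.mem_singleton.1 h
          have := hrest y hymem
          omega
        · intro hall
          have := hall (s - 1) (by rw [hfilter]; exact Multiset.mem_cons_self _ _)
          rw [hcount] at this
          omega
        · rw [hcount, hfilter, hminX, show s - 1 + 1 = s by omega, show t - 1 + 1 = t by omega,
            Multiset.erase_cons_head]
          exact (Multiset.cons_erase hs).symm.trans
            (congrArg (s ::ₘ ·) (Multiset.cons_erase ht).symm)

lemma A_lemma (hb : 6 ≤ b) : q 2 (b + 1) + q 2 (b + 2) ≤ p b := by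
  rw [q, q, p, ← Fintype.card_sum]
  exact Fintype.card_le_of_injective (fA b hb) ((gfA b hb).injective)


end Amap

section Bmap

variable (K a b : ℕ)

lemma count_one_mix2 {X : Multiset ℕ} (h : ∀ x ∈ X, 3 ≤ x) (t m : ℕ) :
    (X + Multiset.replicate t 2 + Multiset.replicate m 1).count 1 = m := by
  rw [Multiset.count_add, Multiset.count_add, Multiset.count_replicate, Multiset.count_replicate]
  have : X.count 1 = 0 := by
    rw [Multiset.count_eq_zero]
    intro h1
    have := h 1 h1
    omega
  simp [this]

lemma count_two_mix2 {X : Multiset ℕ} (h : ∀ x ∈ X, 3 ≤ x) (t m : ℕ) :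
    (X + Multiset.replicate t 2 + Multiset.replicate m 1).count 2 = t := by
  rw [Multiset.count_add, Multiset.count_add, Multiset.count_replicate, Multiset.count_replicate]
  have : X.count 2 = 0 := by
    rw [Multiset.count_eq_zero]
    intro h1
    have := h 2 h1
    omega
  simp [this]

lemma count_three_mix2 {X : Multiset ℕ} (t m : ℕ) :
    (X + Multiset.replicate t 2 + Multiset.replicate m 1).count 3 = X.count 3 := by
  rw [Multiset.count_add, Multiset.count_add, Multiset.count_replicate, Multiset.count_replicate]
  simp

lemma filter_three_mix {X : Multiset ℕ} (h : ∀ x ∈ X, 3 ≤ x) (t m : ℕ) :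
    (X + Multiset.replicate t 2 + Multiset.replicate m 1).filter (fun x => 3 ≤ x) = X := by
  rw [Multiset.filter_add, Multiset.filter_add]
  rw [Multiset.filter_eq_self.2 h]
  have h2 : (Multiset.replicate t 2).filter (fun x => 3 ≤ x) = 0 := by
    rw [Multiset.filter_eq_nil]
    intro x hx
    rw [Multiset.eq_of_mem_replicate hx]
    omega
  have h1 : (Multiset.replicate m 1).filter (fun x => 3 ≤ x) = 0 := by
    rw [Multiset.filter_eq_nil]
    intro x hx
    rw [Multiset.eq_of_mem_replicate hx]
    omega
  rw [h2, h1, add_zero, add_zero]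

lemma filter_four_mix {X : Multiset ℕ} (h : ∀ x ∈ X, 4 ≤ x) (t : ℕ) :
    (X + Multiset.replicate t 2).filter (fun x => 4 ≤ x) = X := by
  rw [Multiset.filter_add]
  rw [Multiset.filter_eq_self.2 h]
  have h2 : (Multiset.replicate t 2).filter (fun x => 4 ≤ x) = 0 := by
    rw [Multiset.filter_eq_nil]
    intro x hx
    rw [Multiset.eq_of_mem_replicate hx]
    omega
  rw [h2, add_zero]

/-- the BASE injection. -/
noncomputable def fB (hK : 3 ≤ K) (h1 : K ≤ a) (h2 : a < 2 * K) (hb : 2 ≤ b) :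
    QP K (a + b) → Nat.Partition b := fun c =>
  have hne : c.1.parts ≠ 0 := parts_ne c.1 (by omega)
  have hs : minP c.1.parts ∈ c.1.parts := minP_mem hne
  have hsum : c.1.parts.sum = a + b := c.1.parts_sum
  have hsK : K ≤ minP c.1.parts := c.2 _ hs
  if hsle : minP c.1.parts ≤ a then
    -- main case : erase the two smallest parts
    have hne2 : c.1.parts.erase (minP c.1.parts) ≠ 0 := by
      intro h0
      have := sum_erase' hs
      rw [h0] at this
      simp at this
      omega
    have ht : minP (c.1.parts.erase (minP c.1.parts)) ∈ c.1.parts.erase (minP c.1.parts) :=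
      minP_mem hne2
    have htK : minP c.1.parts ≤ minP (c.1.parts.erase (minP c.1.parts)) :=
      minP_le (Multiset.mem_of_mem_erase ht)
    ⟨((c.1.parts.erase (minP c.1.parts)).erase (minP (c.1.parts.erase (minP c.1.parts))))
        + Multiset.replicate ((minP (c.1.parts.erase (minP c.1.parts)) - minP c.1.parts) / 2) 2
        + Multiset.replicate (2 * minP c.1.parts - a
            + (minP (c.1.parts.erase (minP c.1.parts)) - minP c.1.parts) % 2) 1,
      fun {x} hx => by
        rcases Multiset.mem_add.1 hx with h | h
        · rcases Multiset.mem_add.1 h with h | h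
          · exact c.1.parts_pos (Multiset.mem_of_mem_erase (Multiset.mem_of_mem_erase h))
          · rw [Multiset.eq_of_mem_replicate h]; omega
        · rw [Multiset.eq_of_mem_replicate h]; omega,
      by
        rw [Multiset.sum_add, Multiset.sum_add, Multiset.sum_replicate, Multiset.sum_replicate,
          smul_eq_mul, smul_eq_mul]
        have e1 := sum_erase' hs
        have e2 := sum_erase' ht
        omega⟩
  else
    -- Y case : single smallest part exceeds a
    if hd1 : minP c.1.parts - a = 1 then
      have hRne : c.1.parts.erase (minP c.1.parts) ≠ 0 := by
        intro h0
        have := sum_erase' hs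
        rw [h0] at this
        simp at this
        omega
      have hM : maxP (c.1.parts.erase (minP c.1.parts)) ∈ c.1.parts.erase (minP c.1.parts) :=
        maxP_mem hRne
      ⟨(maxP (c.1.parts.erase (minP c.1.parts)) + 1) ::ₘ
          ((c.1.parts.erase (minP c.1.parts)).erase (maxP (c.1.parts.erase (minP c.1.parts)))),
        fun {x} hx => by
          rcases Multiset.mem_cons.1 hx with h | h
          · omega
          · exact c.1.parts_pos (Multiset.mem_of_mem_erase (Multiset.mem_of_mem_erase h)),
        by
          rw [Multiset.sum_cons]
          have e1 := sum_erase' hs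
          have e2 := sum_erase' hM
          omega⟩
    else if hev : (minP c.1.parts - a) % 2 = 0 then
      ⟨c.1.parts.erase (minP c.1.parts) + Multiset.replicate ((minP c.1.parts - a) / 2) 2,
        fun {x} hx => by
          rcases Multiset.mem_add.1 hx with h | h
          · exact c.1.parts_pos (Multiset.mem_of_mem_erase h)
          · rw [Multiset.eq_of_mem_replicate h]; omega,
        by
          rw [Multiset.sum_add, Multiset.sum_replicate, smul_eq_mul]
          have e1 := sum_erase' hs
          omega⟩
    else
      ⟨3 ::ₘ c.1.parts.erase (minP c.1.parts)
          + Multiset.replicate ((minP c.1.parts - a - 3) / 2) 2,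
        fun {x} hx => by
          rcases Multiset.mem_add.1 hx with h | h
          · rcases Multiset.mem_cons.1 h with h | h
            · omega
            · exact c.1.parts_pos (Multiset.mem_of_mem_erase h)
          · rw [Multiset.eq_of_mem_replicate h]; omega,
        by
          rw [Multiset.sum_add, Multiset.sum_cons, Multiset.sum_replicate, smul_eq_mul]
          have e1 := sum_erase' hs
          omega⟩

/-- default element of `QP K (a+b)` -/
noncomputable def dB (h1 : 1 ≤ K) (h2 : K ≤ a + b) : QP K (a + b) :=
  ⟨⟨{a + b}, fun {x} hx => by rw [Multiset.mem_singleton.1 hx]; omega, by simp⟩,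
    fun x hx => by rw [Multiset.mem_singleton.1 hx]; omega⟩

/-- left inverse of the BASE injection -/
noncomputable def gB (hK : 3 ≤ K) (h1 : K ≤ a) (h2 : a < 2 * K) (hb : 2 ≤ b) :
    Nat.Partition b → QP K (a + b) := fun ν =>
  if hm : ν.parts.count 1 ≠ 0 then
    -- main read
    if h : K ≤ (ν.parts.count 1 + a) / 2
        ∧ (∀ x ∈ ν.parts.filter (fun x => 3 ≤ x),
            (ν.parts.count 1 + a) / 2 + 2 * ν.parts.count 2 + (ν.parts.count 1 + a) % 2 ≤ x)
        ∧ (ν.parts.count 1 + a) / 2 + ((ν.parts.count 1 + a) / 2 + 2 * ν.parts.count 2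
            + (ν.parts.count 1 + a) % 2) + (ν.parts.filter (fun x => 3 ≤ x)).sum = a + b then
      ⟨⟨(ν.parts.count 1 + a) / 2 ::ₘ ((ν.parts.count 1 + a) / 2 + 2 * ν.parts.count 2
            + (ν.parts.count 1 + a) % 2) ::ₘ ν.parts.filter (fun x => 3 ≤ x),
        fun {x} hx => by
          rcases Multiset.mem_cons.1 hx with hh | hh
          · omega
          rcases Multiset.mem_cons.1 hh with hh | hh
          · omega
          · have := (Multiset.mem_filter.1 hh).2; omega,
        by rw [Multiset.sum_cons, Multiset.sum_cons]; omega⟩,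
        fun x hx => by
          rcases Multiset.mem_cons.1 hx with hh | hh
          · omega
          rcases Multiset.mem_cons.1 hh with hh | hh
          · omega
          · have h3 := (Multiset.mem_filter.1 hh).2
            have := h.2.1 x hh
            omega⟩
    else dB K a b (by omega) (by omega)
  else
    if hy1 : ν.parts.count 2 = 0 ∧ ν.parts.count 3 = 0 then
      -- bump read
      if h : maxP ν.parts ∈ ν.parts ∧ a + 2 ≤ maxP ν.parts
          ∧ (∀ x ∈ ν.parts.erase (maxP ν.parts), K ≤ x)
          ∧ (maxP ν.parts - 1) + (a + 1) + (ν.parts.erase (maxP ν.parts)).sum = a + b then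
        ⟨⟨(maxP ν.parts - 1) ::ₘ (a + 1) ::ₘ ν.parts.erase (maxP ν.parts),
          fun {x} hx => by
            rcases Multiset.mem_cons.1 hx with hh | hh
            · omega
            rcases Multiset.mem_cons.1 hh with hh | hh
            · omega
            · have := h.2.2.1 x hh; omega,
          by rw [Multiset.sum_cons, Multiset.sum_cons]; omega⟩,
          fun x hx => by
            rcases Multiset.mem_cons.1 hx with hh | hh
            · omega
            rcases Multiset.mem_cons.1 hh with hh | hh
            · omega
            · exact h.2.2.1 x hh⟩
      else dB K a b (by omega) (by omega)
    else
      -- pad read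
      if h : (∀ x ∈ ν.parts.filter (fun x => 4 ≤ x), K ≤ x)
          ∧ (a + (2 * ν.parts.count 2 + 3 * ν.parts.count 3))
              + (ν.parts.filter (fun x => 4 ≤ x)).sum = a + b then
        ⟨⟨(a + (2 * ν.parts.count 2 + 3 * ν.parts.count 3)) ::ₘ ν.parts.filter (fun x => 4 ≤ x),
          fun {x} hx => by
            rcases Multiset.mem_cons.1 hx with hh | hh
            · omega
            · have := (Multiset.mem_filter.1 hh).2; omega,
          by rw [Multiset.sum_cons]; omega⟩,
          fun x hx => by
            rcases Multiset.mem_cons.1 hx with hh | hh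
            · omega
            · exact h.1 x hh⟩
      else dB K a b (by omega) (by omega)

lemma count_eq_zero_of_bound {X : Multiset ℕ} {v B : ℕ} (h : ∀ x ∈ X, B ≤ x) (hv : v < B) :
    X.count v = 0 := by
  rw [Multiset.count_eq_zero]
  intro hm
  have := h v hm
  omega

lemma gfB (hK : 3 ≤ K) (h1 : K ≤ a) (h2 : a < 2 * K) (hb : 2 ≤ b) :
    Function.LeftInverse (gB K a b hK h1 h2 hb) (fB K a b hK h1 h2 hb) := by
  intro c
  have hne : c.1.parts ≠ 0 := parts_ne c.1 (by omega)
  have hs : minP c.1.parts ∈ c.1.parts := minP_mem hne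
  have hsum : c.1.parts.sum = a + b := c.1.parts_sum
  have hsK : K ≤ minP c.1.parts := c.2 _ hs
  set P := c.1.parts with hPdef
  set s := minP P with hsdef
  by_cases hsle : s ≤ a
  · -- main case
    have hne2 : P.erase s ≠ 0 := by
      intro h0
      have := sum_erase' hs
      rw [h0] at this
      simp at this
      omega
    set s2 := minP (P.erase s) with hs2def
    have ht : s2 ∈ P.erase s := minP_mem hne2
    have htK : s ≤ s2 := minP_le (Multiset.mem_of_mem_erase ht)
    have e1 := sum_erase' hs
    have e2 := sum_erase' ht
    set W0 := (P.erase s).erase s2 with hW0def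
    have hW0 : ∀ x ∈ W0, s2 ≤ x := fun x hx => minP_le (Multiset.mem_of_mem_erase hx)
    have hW03 : ∀ x ∈ W0, 3 ≤ x := fun x hx => by have := hW0 x hx; omega
    set t := (s2 - s) / 2 with htdef
    set m := 2 * s - a + (s2 - s) % 2 with hmdef
    have hparts : (fB K a b hK h1 h2 hb c).parts
        = W0 + Multiset.replicate t 2 + Multiset.replicate m 1 := by
      show (if hsle : minP c.1.parts ≤ a then _ else _ : Nat.Partition b).parts = _
      rw [dif_pos hsle]
    have hc1 : (fB K a b hK h1 h2 hb c).parts.count 1 = m := by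
      rw [hparts, count_one_mix2 hW03]
    have hc2 : (fB K a b hK h1 h2 hb c).parts.count 2 = t := by
      rw [hparts, count_two_mix2 hW03]
    have hf3 : (fB K a b hK h1 h2 hb c).parts.filter (fun x => 3 ≤ x) = W0 := by
      rw [hparts, filter_three_mix hW03]
    have hm0 : m ≠ 0 := by omega
    have hsv : (m + a) / 2 = s := by omega
    have hs2v : (m + a) / 2 + 2 * t + (m + a) % 2 = s2 := by omega
    have hW0sum : s + s2 + W0.sum = a + b := by omega
    show gB K a b hK h1 h2 hb _ = c
    unfold gB
    rw [dif_pos (by rw [hc1]; exact hm0)]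
    refine (dif_pos (by
      refine ⟨?_, ?_, ?_⟩
      · rw [hc1, hsv]; exact hsK
      · intro x hx
        rw [hf3] at hx
        rw [hc1, hc2]
        have := hW0 x hx
        omega
      · rw [hc1, hc2, hf3]; omega)).trans ?_
    apply Subtype.ext
    apply Nat.Partition.ext
    show _ ::ₘ _ ::ₘ _ = P
    rw [hc1, hc2, hf3, hs2v, hsv]
    exact ((Multiset.cons_erase hs).symm.trans
      (congrArg (s ::ₘ ·) (Multiset.cons_erase ht).symm)).symm
  · -- Y case
    have hs4 : a + 1 ≤ s := by omega
    set R := P.erase s with hRdef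
    have hR : ∀ x ∈ R, s ≤ x := fun x hx => minP_le (Multiset.mem_of_mem_erase hx)
    have hRK : ∀ x ∈ R, K ≤ x := fun x hx => by have := hR x hx; omega
    have hR4 : ∀ x ∈ R, 4 ≤ x := fun x hx => by have := hR x hx; omega
    have e1 := sum_erase' hs
    have hRsum : R.sum = (P.erase s).sum := rfl
    by_cases hd1 : s - a = 1
    · -- bump branch
      have hRne : R ≠ 0 := by
        intro h0
        rw [hRdef] at h0
        rw [h0] at e1
        simp at e1
        omega
      set M0 := maxP R with hM0def
      have hM : M0 ∈ R := maxP_mem hRne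
      have hM0s : s ≤ M0 := hR _ hM
      have e2 := sum_erase' hM
      have hparts : (fB K a b hK h1 h2 hb c).parts = (M0 + 1) ::ₘ R.erase M0 := by
        show (if hsle : minP c.1.parts ≤ a then _ else _ : Nat.Partition b).parts = _
        rw [dif_neg hsle, dif_pos hd1]
      have hRe : ∀ x ∈ R.erase M0, s ≤ x := fun x hx => hR x (Multiset.mem_of_mem_erase hx)
      have hReM : ∀ x ∈ R.erase M0, x ≤ M0 := fun x hx => le_maxP (Multiset.mem_of_mem_erase hx)
      have hc1 : (fB K a b hK h1 h2 hb c).parts.count 1 = 0 := by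
        rw [hparts, Multiset.count_cons]
        rw [count_eq_zero_of_bound hRe (by omega)]
        simp
        omega
      have hc2 : (fB K a b hK h1 h2 hb c).parts.count 2 = 0 := by
        rw [hparts, Multiset.count_cons]
        rw [count_eq_zero_of_bound hRe (by omega)]
        simp
        omega
      have hc3 : (fB K a b hK h1 h2 hb c).parts.count 3 = 0 := by
        rw [hparts, Multiset.count_cons]
        rw [count_eq_zero_of_bound hRe (by omega)]
        simp
        omega
      have hMtop : maxP (fB K a b hK h1 h2 hb c).parts = M0 + 1 := by
        have hge : M0 + 1 ≤ maxP (fB K a b hK h1 h2 hb c).parts := by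
          apply le_maxP
          rw [hparts]
          exact Multiset.mem_cons_self _ _
        have hmem : maxP (fB K a b hK h1 h2 hb c).parts ∈ (M0 + 1) ::ₘ R.erase M0 := by
          rw [← hparts]
          apply maxP_mem
          rw [hparts]
          simp
        rcases Multiset.mem_cons.1 hmem with h | h
        · exact h
        · have := hReM _ h
          omega
      show gB K a b hK h1 h2 hb _ = c
      unfold gB
      rw [dif_neg (by rw [hc1]; omega)]
      rw [dif_pos ⟨hc2, hc3⟩]
      refine (dif_pos (by
        refine ⟨?_, ?_, ?_, ?_⟩
        · rw [hMtop, hparts]; exact Multiset.mem_cons_self _ _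
        · rw [hMtop]; omega
        · rw [hMtop, hparts, Multiset.erase_cons_head]
          intro x hx
          have := hRe x hx
          omega
        · rw [hMtop, hparts, Multiset.erase_cons_head]
          omega)).trans ?_
      apply Subtype.ext
      apply Nat.Partition.ext
      show _ ::ₘ _ ::ₘ _ = P
      rw [hMtop, hparts, Multiset.erase_cons_head, Nat.add_sub_cancel,
        show a + 1 = s by omega]
      rw [Multiset.cons_swap]
      exact ((Multiset.cons_erase hs).symm.trans
        (congrArg (s ::ₘ ·) (Multiset.cons_erase hM).symm)).symm
    · by_cases hev : (s - a) % 2 = 0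
      · -- even pad branch
        have hparts : (fB K a b hK h1 h2 hb c).parts
            = R + Multiset.replicate ((s - a) / 2) 2 := by
          show (if hsle : minP c.1.parts ≤ a then _ else _ : Nat.Partition b).parts = _
          rw [dif_neg hsle, dif_neg hd1, dif_pos hev]
        have hc1 : (fB K a b hK h1 h2 hb c).parts.count 1 = 0 := by
          rw [hparts, Multiset.count_add, count_eq_zero_of_bound hR4 (by omega),
            Multiset.count_replicate]
          simp
        have hc2 : (fB K a b hK h1 h2 hb c).parts.count 2 = (s - a) / 2 := by
          rw [hparts, Multiset.count_add, count_eq_zero_of_bound hR4 (by omega),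
            Multiset.count_replicate]
          simp
        have hc3 : (fB K a b hK h1 h2 hb c).parts.count 3 = 0 := by
          rw [hparts, Multiset.count_add, count_eq_zero_of_bound hR4 (by omega),
            Multiset.count_replicate]
          simp
        have hf4 : (fB K a b hK h1 h2 hb c).parts.filter (fun x => 4 ≤ x) = R := by
          rw [hparts, filter_four_mix hR4]
        have hc2ne : (s - a) / 2 ≠ 0 := by omega
        show gB K a b hK h1 h2 hb _ = c
        unfold gB
        rw [dif_neg (by rw [hc1]; omega)]
        rw [dif_neg (by rw [hc2]; intro hcon; exact hc2ne hcon.1)]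
        refine (dif_pos (by
          constructor
          · intro x hx
            rw [hf4] at hx
            exact hRK x hx
          · rw [hc2, hc3, hf4]
            omega)).trans ?_
        apply Subtype.ext
        apply Nat.Partition.ext
        show _ ::ₘ _ = P
        rw [hc2, hc3, hf4, show a + (2 * ((s - a) / 2) + 3 * 0) = s by omega]
        exact Multiset.cons_erase hs
      · -- odd pad branch
        have hd3 : 3 ≤ s - a := by omega
        have hparts : (fB K a b hK h1 h2 hb c).parts
            = 3 ::ₘ R + Multiset.replicate ((s - a - 3) / 2) 2 := by
          show (if hsle : minP c.1.parts ≤ a then _ else _ : Nat.Partition b).parts = _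
          rw [dif_neg hsle, dif_neg hd1, dif_neg hev]
        have hc1 : (fB K a b hK h1 h2 hb c).parts.count 1 = 0 := by
          rw [hparts, Multiset.count_add, Multiset.count_cons,
            count_eq_zero_of_bound hR4 (by omega), Multiset.count_replicate]
          simp
        have hc2 : (fB K a b hK h1 h2 hb c).parts.count 2 = (s - a - 3) / 2 := by
          rw [hparts, Multiset.count_add, Multiset.count_cons,
            count_eq_zero_of_bound hR4 (by omega), Multiset.count_replicate]
          simp
        have hc3 : (fB K a b hK h1 h2 hb c).parts.count 3 = 1 := by
          rw [hparts, Multiset.count_add, Multiset.count_cons,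
            count_eq_zero_of_bound hR4 (by omega), Multiset.count_replicate]
          simp
        have hf4 : (fB K a b hK h1 h2 hb c).parts.filter (fun x => 4 ≤ x) = R := by
          rw [hparts, Multiset.filter_add, Multiset.filter_cons_of_neg _ (by omega),
            Multiset.filter_eq_self.2 hR4]
          have hrep : (Multiset.replicate ((s - a - 3) / 2) 2).filter (fun x => 4 ≤ x) = 0 := by
            rw [Multiset.filter_eq_nil]
            intro x hx
            rw [Multiset.eq_of_mem_replicate hx]
            omega
          rw [hrep, add_zero]
        show gB K a b hK h1 h2 hb _ = c
        unfold gB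
        rw [dif_neg (by rw [hc1]; omega)]
        rw [dif_neg (by rw [hc3]; intro hcon; exact absurd hcon.2 (by omega))]
        refine (dif_pos (by
          constructor
          · intro x hx
            rw [hf4] at hx
            exact hRK x hx
          · rw [hc2, hc3, hf4]
            omega)).trans ?_
        apply Subtype.ext
        apply Nat.Partition.ext
        show _ ::ₘ _ = P
        rw [hc2, hc3, hf4, show a + (2 * ((s - a - 3) / 2) + 3 * 1) = s by omega]
        exact Multiset.cons_erase hs

lemma BASE (K a b : ℕ) (hK : 3 ≤ K) (h1 : K ≤ a) (h2 : a < 2 * K) (hb : 2 ≤ b) :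
    q K (a + b) ≤ p b := by
  rw [q, p]
  exact Fintype.card_le_of_injective (fB K a b hK h1 h2 hb)
    ((gfB K a b hK h1 h2 hb).injective)


end Bmap


lemma BASE22 (b : ℕ) (hb : 6 ≤ b) : q 2 (2 + b) ≤ p b := by
  have hA := A_lemma b hb
  have : q 2 (2 + b) = q 2 (b + 2) := by rw [Nat.add_comm]
  omega

lemma BASE23 (b : ℕ) (hb : 6 ≤ b) : q 2 (3 + b) ≤ p b := by
  have hA := A_lemma b hb
  have hid : q 2 (b + 3) = q 2 (b + 1) + q 3 (b + 3) := by
    have := ID 2 (b + 1) (by omega)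
    rw [show b + 1 + 2 = b + 3 by omega] at this
    exact this
  have hred : q 3 (b + 3) ≤ q 2 (b + 2) := by
    have := q_redmin 2 (b + 2) (by omega)
    rw [show b + 2 + 1 = b + 3 by omega] at this
    exact this
  have : q 2 (3 + b) = q 2 (b + 3) := by rw [Nat.add_comm]
  omega

/-- the key supermultiplicative bound for restricted partitions. -/
lemma Dlem : ∀ N K a b : ℕ, 2 * a - K ≤ N → 2 ≤ K → 6 ≤ b → (a = 0 ∨ K ≤ a) →
    q K (a + b) ≤ q K a * p b := by
  intro N
  induction N with
  | zero =>
    intro K a b hN hK hb ha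
    have ha0 : a = 0 := by omega
    subst ha0
    rw [q_zero, one_mul, Nat.zero_add]
    exact q_le_p K b
  | succ N ih =>
    intro K a b hN hK hb ha
    rcases ha with ha0 | haK
    · subst ha0
      rw [q_zero, one_mul, Nat.zero_add]
      exact q_le_p K b
    · by_cases hsmall : a < 2 * K
      · rw [q_window K a (by omega) haK hsmall, one_mul]
        rcases Nat.lt_or_ge K 3 with h3 | h3
        · -- K = 2, a ∈ {2, 3}
          have hK2 : K = 2 := by omega
          subst hK2
          rcases (by omega : a = 2 ∨ a = 3) with h | h
          · subst h; exact BASE22 b hb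
          · subst h; exact BASE23 b hb
        · exact BASE K a b h3 haK hsmall (by omega)
      · -- a ≥ 2K : recursion
        have hsplit : q K (a + b) = q K (a - K + b) + q (K + 1) (a + b) := by
          have := ID K (a - K + b) (by omega)
          rw [show a - K + b + K = a + b by omega] at this
          exact this
        have hqa : q K a = q K (a - K) + q (K + 1) a := by
          have := ID K (a - K) (by omega)
          rw [show a - K + K = a by omega] at this
          exact this
        have t1 : q K (a - K + b) ≤ q K (a - K) * p b :=
          ih K (a - K) b (by omega) hK hb (by omega)
        have t2 : q (K + 1) (a + b) ≤ q (K + 1) a * p b :=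
          ih (K + 1) a b (by omega) (by omega) hb (by omega)
        calc q K (a + b) = q K (a - K + b) + q (K + 1) (a + b) := hsplit
          _ ≤ q K (a - K) * p b + q (K + 1) a * p b := Nat.add_le_add t1 t2
          _ = (q K (a - K) + q (K + 1) a) * p b := by ring
          _ = q K a * p b := by rw [← hqa]

lemma p_succ (n : ℕ) : p (n + 1) = p n + q 2 (n + 1) := by
  rw [p_eq_q1, p_eq_q1]
  have := ID 1 n (le_refl 1)
  exact this

/-- main inequality for b ≥ 6. -/
lemma Hmain : ∀ a b : ℕ, 2 ≤ a → 6 ≤ b → p (a + b) ≤ p a * p b := by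
  intro a
  induction a using Nat.strong_induction_on with
  | _ a ih =>
    intro b ha hb
    rcases Nat.eq_or_lt_of_le ha with h2 | h3
    · -- a = 2
      subst h2
      have hA := A_lemma b hb
      have e1 : p (b + 2) = p (b + 1) + q 2 (b + 2) := p_succ (b + 1)
      have e2 : p (b + 1) = p b + q 2 (b + 1) := p_succ b
      have : p (2 + b) = p (b + 2) := by rw [Nat.add_comm]
      rw [this, pv2]
      omega
    · -- a ≥ 3
      have e1 : p (a + b) = p (a - 1 + b) + q 2 (a + b) := by
        have := p_succ (a - 1 + b)
        rw [show a - 1 + b + 1 = a + b by omega] at this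
        rw [this]
      have hIH : p (a - 1 + b) ≤ p (a - 1) * p b := ih (a - 1) (by omega) b (by omega) hb
      have hD : q 2 (a + b) ≤ q 2 a * p b :=
        Dlem (2 * a) 2 a b (by omega) le_rfl hb (Or.inr (by omega))
      have hpa : p a = p (a - 1) + q 2 a := by
        have := p_succ (a - 1)
        rw [show a - 1 + 1 = a by omega] at this
        exact this
      calc p (a + b) = p (a - 1 + b) + q 2 (a + b) := e1
        _ ≤ p (a - 1) * p b + q 2 a * p b := by omega
        _ = (p (a - 1) + q 2 a) * p b := by ring
        _ = p a * p b := by rw [← hpa]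


end BO

theorem bessenrodt_ono (a b : ℕ) (ha : 2 ≤ a) (hb : 2 ≤ b) (hab : 8 < a + b) :
    p (a + b) ≤ p a * p b := by
  rcases Nat.lt_or_ge b 6 with hb6 | hb6
  · rcases Nat.lt_or_ge a 6 with ha6 | ha6
    · -- both small : a+b ∈ {9, 10}, cases (4,5),(5,4),(5,5)
      have := BO.pv4
      have := BO.pv5
      have := BO.pv9
      have := BO.pv10
      interval_cases a <;> interval_cases b <;>
        first
          | omega
          | norm_num [BO.pv4, BO.pv5, BO.pv9, BO.pv10]
    · have := BO.Hmain b a hb ha6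
      rw [Nat.add_comm b a] at this
      calc p (a + b) ≤ p b * p a := this
        _ = p a * p b := Nat.mul_comm _ _
  · exact BO.Hmain a b ha hb6
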